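/- For every s > 0 there exists c > 0 such that for every positive integer n and every z ∈ ℂ with |z| ≤ 1 + s/√n, the Ginibre correlation kernel satisfies K_n(z,z) ≥ c·n. -/

import Mathlib

set_option maxHeartbeats 1000000

open Finset Real

/-- The Ginibre correlation kernel
`K_n(z,w) = n s_n(n z w̄) e^{−n(|z|²+|w|²)/2}` with `s_n(ζ) = Σ_{k<n} ζ^k/k!`. -/
noncomputable def ginibreKernel (n : ℕ) (z w : ℂ) : ℂ :=
  (n : ℂ) * (∑ k ∈ Finset.range n, ((n : ℂ) * z * (starRingEnd ℂ) w) ^ k / (k.factorial : ℂ)) *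
    Complex.exp (-(n : ℂ) * ((‖z‖ : ℂ) ^ 2 + (‖w‖ : ℂ) ^ 2) / 2)


noncomputable def gS (n : ℕ) (x : ℝ) : ℝ := ∑ k ∈ Finset.range n, x ^ k / (k.factorial : ℝ)

noncomputable def gF (n : ℕ) (x : ℝ) : ℝ := Real.exp (-x) * gS n x

lemma gS_hasDerivAt (n : ℕ) (x : ℝ) : HasDerivAt (gS (n + 1)) (gS n x) x := by
  have h : HasDerivAt (gS (n+1)) (∑ k ∈ Finset.range (n+1), (k : ℝ) * x ^ (k - 1) / (k.factorial : ℝ)) x := by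
    apply HasDerivAt.fun_sum
    intro k _
    exact (hasDerivAt_pow k x).div_const _
  convert h using 1
  rw [Finset.sum_range_succ', gS]
  simp only [Nat.cast_zero, Nat.factorial_zero, Nat.cast_one, pow_zero]
  rw [show ((0:ℝ) * x ^ (0-1) / 1) = 0 by simp]
  rw [add_zero]
  apply Finset.sum_congr rfl
  intro k _
  rw [Nat.factorial_succ]
  push_cast
  field_simp

lemma gF_hasDerivAt (n : ℕ) (x : ℝ) :
    HasDerivAt (gF (n + 1)) (-(Real.exp (-x) * x ^ n / (n.factorial : ℝ))) x := by
  have hexp : HasDerivAt (fun y : ℝ => Real.exp (-y)) (-Real.exp (-x)) x := by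
    have := (hasDerivAt_neg x).exp
    simpa using this
  have h := hexp.mul (gS_hasDerivAt n x)
  have : gS (n+1) x = gS n x + x ^ n / (n.factorial : ℝ) := by
    rw [gS, gS, Finset.sum_range_succ]
  refine HasDerivAt.congr_deriv h ?_
  rw [this]
  ring

lemma gF_anti (n : ℕ) (hn : 1 ≤ n) {x y : ℝ} (hx : 0 ≤ x) (hxy : x ≤ y) :
    gF n y ≤ gF n x := by
  obtain ⟨m, rfl⟩ := Nat.exists_eq_add_of_le hn
  set f := gF (1 + m) with hf
  have hderiv : ∀ t : ℝ, HasDerivAt f (-(Real.exp (-t) * t ^ m / (m.factorial : ℝ))) t := by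
    intro t; rw [hf, add_comm]; exact gF_hasDerivAt m t
  have hanti : AntitoneOn f (Set.Ici (0:ℝ)) := by
    apply antitoneOn_of_deriv_nonpos (convex_Ici 0)
    · exact fun t _ => ((hderiv t).differentiableAt).continuousAt.continuousWithinAt
    · exact fun t _ => ((hderiv t).differentiableAt).differentiableWithinAt
    · intro t ht
      rw [(hderiv t).deriv]
      rw [interior_Ici] at ht
      have ht' : 0 < t := ht
      have : (0:ℝ) ≤ Real.exp (-t) * t ^ m / (m.factorial : ℝ) := by positivity
      linarith
  exact hanti hx (le_trans hx hxy) hxy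

lemma gK_re (n : ℕ) (z : ℂ) :
    (ginibreKernel n z z).re
      = (n : ℝ) * gS n ((n : ℝ) * (‖z‖) ^ 2)
        * Real.exp (-((n : ℝ) * (‖z‖) ^ 2)) := by
  have h1 : (n : ℂ) * z * (starRingEnd ℂ) z = (((n : ℝ) * (‖z‖) ^ 2 : ℝ) : ℂ) := by
    rw [mul_assoc, Complex.mul_conj]
    rw [Complex.normSq_eq_norm_sq]
    push_cast
    ring
  have h2 : -(n : ℂ) * ((‖z‖ : ℂ) ^ 2 + (‖z‖ : ℂ) ^ 2) / 2
      = ((-((n : ℝ) * (‖z‖) ^ 2) : ℝ) : ℂ) := by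
    push_cast; ring
  rw [ginibreKernel, h1, h2, ← Complex.ofReal_exp]
  have h3 : (∑ k ∈ Finset.range n, (((n : ℝ) * (‖z‖) ^ 2 : ℝ) : ℂ) ^ k / (k.factorial : ℂ))
      = ((gS n ((n : ℝ) * (‖z‖) ^ 2) : ℝ) : ℂ) := by
    rw [gS]
    push_cast
    rfl
  rw [h3]
  rw [← Complex.ofReal_natCast, ← Complex.ofReal_mul, ← Complex.ofReal_mul, Complex.ofReal_re]


lemma factorial_upper (q : ℕ) (hq : 1 ≤ q) :
    (q.factorial : ℝ) ≤ Real.exp 1 * Real.sqrt q * (q / Real.exp 1) ^ q := by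
  obtain ⟨m, rfl⟩ := Nat.exists_eq_add_of_le hq
  have h1 : Stirling.stirlingSeq (1 + m) ≤ Stirling.stirlingSeq 1 := by
    have := Stirling.stirlingSeq'_antitone (Nat.zero_le m)
    simpa [Function.comp, Nat.add_comm] using this
  rw [Stirling.stirlingSeq_one] at h1
  have hq1 : (0:ℝ) < (1 + m : ℕ) := by positivity
  have hpos : (0:ℝ) < Real.sqrt (2 * (1 + m : ℕ)) * ((1 + m : ℕ) / Real.exp 1) ^ (1 + m) := by
    positivity
  rw [Stirling.stirlingSeq, div_le_div_iff₀ hpos (by positivity)] at h1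
  calc ((1+m).factorial : ℝ)
      ≤ Real.exp 1 * (Real.sqrt (2 * (1 + m : ℕ)) * ((1 + m : ℕ) / Real.exp 1) ^ (1 + m)) / Real.sqrt 2 := by
        rw [le_div_iff₀ (by positivity)]
        exact h1
    _ = Real.exp 1 * Real.sqrt (1 + m : ℕ) * ((1 + m : ℕ) / Real.exp 1) ^ (1 + m) := by
        rw [Real.sqrt_mul (by norm_num : (0:ℝ) ≤ 2)]
        field_simp

lemma exp_div_le (x : ℝ) (hx : 0 ≤ x) : Real.exp (x / (1 + x)) ≤ 1 + x := by
  have h1 : (0:ℝ) < 1 + x := by linarith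
  have h2 := Real.add_one_le_exp (-(x / (1 + x)))
  have h3 : 0 < Real.exp (-(x / (1 + x))) := Real.exp_pos _
  have h4 : -(x / (1+x)) + 1 = 1 / (1 + x) := by field_simp; ring
  rw [h4] at h2
  have h5 : Real.exp (x / (1+x)) * (1 / (1+x)) ≤ Real.exp (x/(1+x)) * Real.exp (-(x/(1+x))) :=
    mul_le_mul_of_nonneg_left h2 (le_of_lt (Real.exp_pos _))
  rw [← Real.exp_add] at h5
  simp only [add_neg_cancel, Real.exp_zero] at h5
  calc Real.exp (x / (1+x)) = Real.exp (x/(1+x)) * (1/(1+x)) * (1+x) := by field_simp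
  _ ≤ 1 * (1 + x) := mul_le_mul_of_nonneg_right h5 (le_of_lt h1)
  _ = 1 + x := one_mul _

-- k! ≤ q! * n^j for k = q + j ≤ n  (real version)
lemma factorial_ratio (q j n : ℕ) (h : q + j ≤ n) :
    ((q + j).factorial : ℝ) ≤ (q.factorial : ℝ) * (n : ℝ) ^ j := by
  induction j with
  | zero => simp
  | succ i ih =>
    have hi : q + i ≤ n := by omega
    have h2 : ((q + i + 1 : ℕ) : ℝ) ≤ (n : ℝ) := by exact_mod_cast (by omega : q + i + 1 ≤ n)
    calc ((q + (i+1)).factorial : ℝ) = ((q + i + 1) : ℕ) * ((q+i).factorial : ℝ) := by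
          rw [show q + (i+1) = (q+i)+1 by ring, Nat.factorial_succ]; push_cast; ring
    _ ≤ (n : ℝ) * ((q.factorial : ℝ) * (n:ℝ)^i) := by
        apply mul_le_mul h2 (ih hi) (by positivity) (by positivity)
    _ = (q.factorial : ℝ) * (n:ℝ)^(i+1) := by ring
lemma gF_lower_large (s : ℝ) (hs : 0 < s) (n : ℕ) (hn : 4 ≤ n) :
    Real.exp (-(4*(2*s+1)^2 + 4*s^4)) / (2 * Real.exp 1)
      ≤ gF n ((Real.sqrt n + s) ^ 2) := by
  set m := Nat.sqrt n with hm
  set q := n - m with hq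
  have hm2 : 2 ≤ m := by
    rw [hm, Nat.le_sqrt]
    omega
  have hmmn : m * m ≤ n := by
    have := Nat.sqrt_le' n
    rw [pow_two] at this
    exact this
  have hmn : 2 * m ≤ n := le_trans (by nlinarith) hmmn
  have hmq : m ≤ q := by omega
  have hq2 : 2 ≤ q := le_trans hm2 hmq
  have hqm : q + m = n := by omega
  -- real versions
  have hN4 : (4:ℝ) ≤ (n:ℝ) := by exact_mod_cast hn
  have hN0 : (0:ℝ) < (n:ℝ) := by linarith
  have hsqN : (0:ℝ) < Real.sqrt n := Real.sqrt_pos.2 hN0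
  have hMle : (m:ℝ) ≤ Real.sqrt n := by
    rw [show ((m:ℝ)) = Real.sqrt ((m:ℝ)^2) from (Real.sqrt_sq (by positivity)).symm]
    apply Real.sqrt_le_sqrt
    rw [sq]
    exact_mod_cast hmmn
  have hsqM : Real.sqrt n ≤ 2 * m := by
    have h1 : (n:ℝ) < ((m:ℝ)+1)^2 := by exact_mod_cast Nat.lt_succ_sqrt' n
    have h2 : Real.sqrt n ≤ (m:ℝ) + 1 := by
      rw [show ((m:ℝ)+1) = Real.sqrt (((m:ℝ)+1)^2) from (Real.sqrt_sq (by positivity)).symm]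
      exact Real.sqrt_le_sqrt (le_of_lt h1)
    have : (1:ℝ) ≤ (m:ℝ) := by exact_mod_cast le_trans (by norm_num) hm2
    linarith
  have hQ0 : (0:ℝ) < (q:ℝ) := by exact_mod_cast (by omega : 0 < q)
  have hNQ : (n:ℝ) ≤ 2 * q := by
    have : n ≤ 2 * q := by omega
    exact_mod_cast this
  have hQN : (q:ℝ) ≤ (n:ℝ) := by exact_mod_cast (by omega : q ≤ n)
  set L : ℝ := (Real.sqrt n + s)^2 with hL
  have hNL : (n:ℝ) ≤ L := by
    have : (n:ℝ) = (Real.sqrt n)^2 := (Real.sq_sqrt (le_of_lt hN0)).symm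
    nlinarith [hsqN]
  have hL0 : (0:ℝ) < L := lt_of_lt_of_le hN0 hNL
  set D : ℝ := L - q with hD
  have hD0 : (0:ℝ) ≤ D := by have : (q:ℝ) ≤ L := le_trans hQN hNL; linarith
  -- step 1: sum over Ico q n, each term ≥ L^q/q!
  have hterm : ∀ k ∈ Finset.Ico q n, L ^ q / (q.factorial : ℝ) ≤ L ^ k / (k.factorial : ℝ) := by
    intro k hk
    rw [Finset.mem_Ico] at hk
    obtain ⟨hk1, hk2⟩ := hk
    obtain ⟨j, rfl⟩ := Nat.exists_eq_add_of_le hk1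
    have hfr : ((q+j).factorial : ℝ) ≤ (q.factorial : ℝ) * (n:ℝ)^j := factorial_ratio q j n (le_of_lt hk2)
    have hfr2 : ((q+j).factorial : ℝ) ≤ (q.factorial : ℝ) * L^j := by
      calc ((q+j).factorial : ℝ) ≤ (q.factorial : ℝ) * (n:ℝ)^j := hfr
      _ ≤ (q.factorial : ℝ) * L^j := by
          apply mul_le_mul_of_nonneg_left (pow_le_pow_left₀ (le_of_lt hN0) hNL j) (by positivity)
    rw [div_le_div_iff₀ (by positivity) (by positivity)]
    calc L^q * ((q+j).factorial : ℝ) ≤ L^q * ((q.factorial : ℝ) * L^j) :=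
          mul_le_mul_of_nonneg_left hfr2 (by positivity)
    _ = L^(q+j) * (q.factorial : ℝ) := by rw [pow_add]; ring
  have hsum1 : (m:ℝ) * (L^q / (q.factorial : ℝ)) ≤ gS n L := by
    calc (m:ℝ) * (L^q / (q.factorial : ℝ))
        = ∑ _k ∈ Finset.Ico q n, L^q / (q.factorial : ℝ) := by
          rw [Finset.sum_const, Nat.card_Ico]
          rw [show n - q = m by omega]
          simp [nsmul_eq_mul]
    _ ≤ ∑ k ∈ Finset.Ico q n, L^k / (k.factorial : ℝ) := Finset.sum_le_sum hterm
    _ ≤ gS n L := by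
        rw [gS]
        apply Finset.sum_le_sum_of_subset_of_nonneg
        · intro k hk; rw [Finset.mem_Ico] at hk; exact Finset.mem_range.2 hk.2
        · intro k _ _; positivity
  -- step 2: lower bound L^q/q!
  have hfact := factorial_upper q (by omega)
  have hfpos : (0:ℝ) < (q.factorial : ℝ) := by positivity
  have hstir : (0:ℝ) < Real.exp 1 * Real.sqrt q * ((q:ℝ) / Real.exp 1) ^ q := by positivity
  have hLq : L^q / (q.factorial : ℝ) ≥ L^q / (Real.exp 1 * Real.sqrt q * ((q:ℝ) / Real.exp 1) ^ q) :=
    div_le_div_of_nonneg_left (by positivity) hfpos hfact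
  -- step 3: exp(-L) * L^q / (q/e)^q ≥ exp(-C)
  have hC : D^2 / (q:ℝ) ≤ 4*(2*s+1)^2 + 4*s^4 := by
    have hDle : D ≤ (2*s+1) * Real.sqrt n + s^2 := by
      have hexp : L = (n:ℝ) + 2*s*Real.sqrt n + s^2 := by
        rw [hL, add_sq, Real.sq_sqrt (le_of_lt hN0)]
        ring
      have : D = 2*s*Real.sqrt n + s^2 + ((n:ℝ) - q) := by rw [hD, hexp]; ring
      have hnq : (n:ℝ) - q ≤ Real.sqrt n := by
        have : (n:ℝ) - q = (m:ℝ) := by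
          have : (q:ℝ) + m = n := by exact_mod_cast hqm
          linarith
        linarith [hMle]
      linarith [this, hnq]
    have hD2 : D^2 ≤ 2*(2*s+1)^2*(n:ℝ) + 2*s^4 := by
      have h1 : D^2 ≤ ((2*s+1) * Real.sqrt n + s^2)^2 := by nlinarith
      have h2 : (Real.sqrt n)^2 = (n:ℝ) := Real.sq_sqrt (le_of_lt hN0)
      nlinarith [sq_nonneg ((2*s+1)*Real.sqrt n - s^2)]
    rw [div_le_iff₀ hQ0]
    have h1 : (0:ℝ) ≤ (2*s+1)^2 * (2*(q:ℝ) - n) := by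
      apply mul_nonneg (sq_nonneg _); linarith
    have h2 : (0:ℝ) ≤ s^4 * ((q:ℝ) - 2) := by
      have : (2:ℝ) ≤ (q:ℝ) := by exact_mod_cast hq2
      have hq2' : (2:ℝ) ≤ (q:ℝ) := by exact_mod_cast hq2
      apply mul_nonneg (by positivity); linarith
    nlinarith [hD2, h1, h2]
  have hkey : Real.exp (-(4*(2*s+1)^2 + 4*s^4)) ≤ Real.exp (-L) * (L^q / (((q:ℝ) / Real.exp 1) ^ q)) := by
    have hLq' : L / (q:ℝ) = 1 + D / q := by rw [hD]; field_simp; ring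
    have hbern : Real.exp ((q:ℝ) * (D/q / (1 + D/q))) ≤ (1 + D/q)^q := by
      have h0 : 0 ≤ D / q := by positivity
      have h1 := exp_div_le (D/q) h0
      calc Real.exp ((q:ℝ) * (D/q / (1 + D/q))) = (Real.exp (D/q / (1 + D/q)))^q := by
            rw [← Real.exp_nat_mul]
      _ ≤ (1 + D/q)^q := pow_le_pow_left₀ (le_of_lt (Real.exp_pos _)) h1 q
    have harg : D - D^2/q ≤ (q:ℝ) * (D/q / (1 + D/q)) := by
      have hqD : (0:ℝ) < (q:ℝ) + D := by linarith
      have heq : (q:ℝ) * (D/q / (1 + D/q)) = D - D^2 / ((q:ℝ) + D) := by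
        field_simp
        ring
      rw [heq]
      have : D^2 / ((q:ℝ) + D) ≤ D^2 / q := div_le_div_of_nonneg_left (sq_nonneg D) hQ0 (by linarith)
      linarith
    calc Real.exp (-(4*(2*s+1)^2 + 4*s^4)) ≤ Real.exp (-(D^2/q)) := by
          apply Real.exp_le_exp.2; linarith [hC]
    _ = Real.exp (-D) * Real.exp (D - D^2/q) := by rw [← Real.exp_add]; ring_nf
    _ ≤ Real.exp (-D) * Real.exp ((q:ℝ) * (D/q / (1 + D/q))) := by
          apply mul_le_mul_of_nonneg_left (Real.exp_le_exp.2 harg) (le_of_lt (Real.exp_pos _))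
    _ ≤ Real.exp (-D) * (1 + D/q)^q := mul_le_mul_of_nonneg_left hbern (le_of_lt (Real.exp_pos _))
    _ = Real.exp (-L) * (L^q / (((q:ℝ) / Real.exp 1) ^ q)) := by
          rw [← hLq']
          have hED : Real.exp L = Real.exp D * Real.exp (q:ℝ) := by
            rw [← Real.exp_add]; congr 1; rw [hD]; ring
          have hE1 : (Real.exp 1)^q = Real.exp (q:ℝ) := by
            rw [← Real.exp_nat_mul, mul_one]
          rw [Real.exp_neg, Real.exp_neg, hED, div_pow, div_pow, hE1]
          have hq0 : ((q:ℝ))^q ≠ 0 := by positivity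
          have hDe : Real.exp D ≠ 0 := ne_of_gt (Real.exp_pos _)
          have hexpq : Real.exp (q:ℝ) ≠ 0 := ne_of_gt (Real.exp_pos _)
          field_simp
  -- assemble
  rw [gF]
  have hsqQ : (0:ℝ) < Real.sqrt q := Real.sqrt_pos.2 hQ0
  have hsQN : Real.sqrt q ≤ Real.sqrt n := Real.sqrt_le_sqrt hQN
  calc Real.exp (-(4*(2*s+1)^2 + 4*s^4)) / (2 * Real.exp 1)
      ≤ ((m:ℝ) / (Real.exp 1 * Real.sqrt q)) * Real.exp (-(4*(2*s+1)^2 + 4*s^4)) := by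
        rw [div_mul_eq_mul_div, div_le_div_iff₀ (by positivity) (by positivity)]
        have h2m : Real.sqrt q ≤ 2*(m:ℝ) := le_trans hsQN hsqM
        nlinarith [mul_nonneg (mul_nonneg (le_of_lt (Real.exp_pos (-(4*(2*s+1)^2 + 4*s^4)))) (le_of_lt (Real.exp_pos 1))) (sub_nonneg.2 h2m)]
    _ ≤ ((m:ℝ) / (Real.exp 1 * Real.sqrt q)) * (Real.exp (-L) * (L^q / (((q:ℝ) / Real.exp 1) ^ q))) := by
        apply mul_le_mul_of_nonneg_left hkey (by positivity)
    _ = Real.exp (-L) * ((m:ℝ) * (L^q / (Real.exp 1 * Real.sqrt q * ((q:ℝ) / Real.exp 1) ^ q))) := by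
        field_simp
    _ ≤ Real.exp (-L) * ((m:ℝ) * (L^q / (q.factorial : ℝ))) := by
        apply mul_le_mul_of_nonneg_left _ (le_of_lt (Real.exp_pos _))
        exact mul_le_mul_of_nonneg_left hLq (by positivity)
    _ ≤ Real.exp (-L) * gS n L := mul_le_mul_of_nonneg_left hsum1 (le_of_lt (Real.exp_pos _))

/-- For every `s > 0` there is `c > 0` such that `K_n(z,z) ≥ c n` for all `n ≥ 1` and
all `z` with `|z| ≤ 1 + s/√n`. (Note `K_n(z,z)` is real and positive.) -/
theorem ginibreKernel_diagonal_lower_bound (s : ℝ) (hs : 0 < s) :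
    ∃ c : ℝ, 0 < c ∧ ∀ n : ℕ, 1 ≤ n → ∀ z : ℂ, ‖z‖ ≤ 1 + s / Real.sqrt n →
      c * n ≤ (ginibreKernel n z z).re := by
  refine ⟨min (Real.exp (-(4*(2*s+1)^2 + 4*s^4)) / (2 * Real.exp 1)) (Real.exp (-((2+s)^2))),
    lt_min (by positivity) (Real.exp_pos _), ?_⟩
  intro n hn z hz
  set c := min (Real.exp (-(4*(2*s+1)^2 + 4*s^4)) / (2 * Real.exp 1)) (Real.exp (-((2+s)^2))) with hc
  set x := (n:ℝ) * (‖z‖)^2 with hxdef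
  have hN0 : (0:ℝ) < (n:ℝ) := by exact_mod_cast hn
  have hsqN : (0:ℝ) < Real.sqrt n := Real.sqrt_pos.2 hN0
  have hx0 : 0 ≤ x := by positivity
  have hxL : x ≤ (Real.sqrt n + s)^2 := by
    have h2 : (‖z‖)^2 ≤ (1 + s/Real.sqrt n)^2 :=
      pow_le_pow_left₀ (norm_nonneg z) hz 2
    have key : (n:ℝ) * (1 + s/Real.sqrt n)^2 = (Real.sqrt n + s)^2 := by
      have hnn : Real.sqrt n * Real.sqrt n = (n:ℝ) := Real.mul_self_sqrt (le_of_lt hN0)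
      have h3 : Real.sqrt n * (1 + s/Real.sqrt n) = Real.sqrt n + s := by
        field_simp
      calc (n:ℝ) * (1 + s/Real.sqrt n)^2
          = Real.sqrt n * Real.sqrt n * (1 + s/Real.sqrt n)^2 := by rw [hnn]
      _ = (Real.sqrt n * (1 + s/Real.sqrt n))^2 := by ring
      _ = (Real.sqrt n + s)^2 := by rw [h3]
    calc x ≤ (n:ℝ) * (1 + s/Real.sqrt n)^2 := mul_le_mul_of_nonneg_left h2 (le_of_lt hN0)
    _ = (Real.sqrt n + s)^2 := key
  have hF : c ≤ gF n x := by
    rcases le_or_gt 4 n with h4 | h4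
    · calc c ≤ Real.exp (-(4*(2*s+1)^2 + 4*s^4)) / (2 * Real.exp 1) := min_le_left _ _
      _ ≤ gF n ((Real.sqrt n + s)^2) := gF_lower_large s hs n h4
      _ ≤ gF n x := gF_anti n hn hx0 hxL
    · have hsq4 : Real.sqrt n ≤ 2 := by
        rw [show (2:ℝ) = Real.sqrt 4 from by
          rw [show (4:ℝ) = 2^2 by norm_num, Real.sqrt_sq (by norm_num : (0:ℝ) ≤ 2)]]
        apply Real.sqrt_le_sqrt
        exact_mod_cast (by omega : n ≤ 4)
      have hL2 : (Real.sqrt n + s)^2 ≤ (2+s)^2 := by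
        apply pow_le_pow_left₀ (by positivity)
        linarith
      have hgS1 : (1:ℝ) ≤ gS n x := by
        rw [gS]
        have hsub : ∑ k ∈ Finset.range 1, x^k/(k.factorial:ℝ)
            ≤ ∑ k ∈ Finset.range n, x^k/(k.factorial:ℝ) := by
          apply Finset.sum_le_sum_of_subset_of_nonneg
          · exact Finset.range_subset_range.2 hn
          · intro k _ _; positivity
        simpa using hsub
      have hexp : Real.exp (-((2+s)^2)) ≤ Real.exp (-x) := by
        apply Real.exp_le_exp.2
        have : x ≤ (2+s)^2 := le_trans hxL hL2
        linarith
      calc c ≤ Real.exp (-((2+s)^2)) := min_le_right _ _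
      _ ≤ Real.exp (-x) := hexp
      _ = Real.exp (-x) * 1 := (mul_one _).symm
      _ ≤ Real.exp (-x) * gS n x := mul_le_mul_of_nonneg_left hgS1 (le_of_lt (Real.exp_pos _))
      _ = gF n x := rfl
  rw [gK_re]
  have heq : (n:ℝ) * gS n x * Real.exp (-x) = gF n x * n := by rw [gF]; ring
  rw [← hxdef, heq]
  exact mul_le_mul_of_nonneg_right hF (le_of_lt hN0)
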